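/- Let X and Y be random variables over the same domain X. If P_{x ∼ X}[ P[X = x] / P[Y = x] ≥ 2^k ] ≤ β, then the β-approximate max-information satisfies I_∞^β(X; Y) ≤ k. -/

import Mathlib

open MeasureTheory

/-- Lemma 18 of Dwork et al.: if P_{x∼X}[P[X=x]/P[Y=x] ≥ 2^k] ≤ β, then I_∞^β(X;Y) ≤ k,
i.e., for every set O with P[X ∈ O] > β we have (P[X∈O] − β) ≤ 2^k · P[Y∈O].
The event {P[X=x]/P[Y=x] ≥ 2^k} is expressed in product form 2^k · P[Y=x] ≤ P[X=x]. -/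
theorem stmt1 {α : Type*} [MeasurableSpace α] [MeasurableSingletonClass α]
    (X Y : PMF α) (k β : ℝ)
    (h : (X.toMeasure {x | (2 : ℝ) ^ k * (Y x).toReal ≤ (X x).toReal}).toReal ≤ β) :
    ∀ O : Set α, MeasurableSet O → β < (X.toMeasure O).toReal →
      (X.toMeasure O).toReal - β ≤ (2 : ℝ) ^ k * (Y.toMeasure O).toReal := by
  intro O hO _
  set B : Set α := {x | (2 : ℝ) ^ k * (Y x).toReal ≤ (X x).toReal} with hBdef
  set B' : Set α := B ∩ X.support with hB'def
  have hB'meas : MeasurableSet B' :=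
    (X.support_countable.mono Set.inter_subset_right).measurableSet
  have h1 : X.toMeasure B' ≤ X.toMeasure B := measure_mono Set.inter_subset_left
  have h2 : X.toMeasure O ≤ X.toMeasure (O \ B') + X.toMeasure B' := by
    refine (measure_mono ?_).trans (measure_union_le _ _)
    intro x hx
    by_cases hxB : x ∈ B' <;> simp [hx, hxB]
  have h3 : X.toMeasure (O \ B') ≤ ENNReal.ofReal ((2 : ℝ) ^ k) * Y.toMeasure O := by
    rw [PMF.toMeasure_apply _ (hO.diff hB'meas), PMF.toMeasure_apply _ hO,
        ← ENNReal.tsum_mul_left]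
    refine Summable.tsum_le_tsum (fun x => ?_) ENNReal.summable ENNReal.summable
    by_cases hx : x ∈ O \ B'
    · rw [Set.indicator_of_mem hx, Set.indicator_of_mem hx.1]
      rcases hx with ⟨hxO, hxB'⟩
      by_cases hs : x ∈ X.support
      · have hxB : x ∉ B := fun hb => hxB' ⟨hb, hs⟩
        have hlt : (X x).toReal < (2 : ℝ) ^ k * (Y x).toReal := lt_of_not_ge hxB
        calc X x = ENNReal.ofReal (X x).toReal :=
              (ENNReal.ofReal_toReal (X.apply_ne_top x)).symm
          _ ≤ ENNReal.ofReal ((2 : ℝ) ^ k * (Y x).toReal) :=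
              ENNReal.ofReal_le_ofReal hlt.le
          _ = ENNReal.ofReal ((2 : ℝ) ^ k) * Y x := by
              rw [ENNReal.ofReal_mul (by positivity),
                ENNReal.ofReal_toReal (Y.apply_ne_top x)]
      · have : X x = 0 := PMF.apply_eq_zero_iff X x |>.mpr hs
        simp [this]
    · rw [Set.indicator_of_notMem hx]
      exact zero_le
  have hfin : ∀ (Z : PMF α) (s : Set α), Z.toMeasure s ≠ ⊤ := fun Z s => measure_ne_top _ _
  have h1' : (X.toMeasure B').toReal ≤ β :=
    le_trans (ENNReal.toReal_le_toReal (hfin X B') (hfin X B) |>.mpr h1) h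
  have h3' : (X.toMeasure (O \ B')).toReal ≤ (2 : ℝ) ^ k * (Y.toMeasure O).toReal := by
    have := ENNReal.toReal_le_toReal (hfin X _)
      (ENNReal.mul_ne_top ENNReal.ofReal_ne_top (hfin Y O)) |>.mpr h3
    rwa [ENNReal.toReal_mul, ENNReal.toReal_ofReal (by positivity)] at this
  have h2' : (X.toMeasure O).toReal ≤
      (X.toMeasure (O \ B')).toReal + (X.toMeasure B').toReal := by
    rw [← ENNReal.toReal_add (hfin X _) (hfin X _)]
    exact ENNReal.toReal_le_toReal (hfin X O)
      (ENNReal.add_ne_top.mpr ⟨hfin X _, hfin X _⟩) |>.mpr h2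
  linarith
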